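/- Fix α ∈ (0, 1/2) and p such that 1/(1−α) > p > 0. Then there is a constant K such that for all n ∈ ℕ and all x ∈ ℝ: ∫_0^{2k/n} |x n^{α+1/p} s^α|² · 1_{|x n^{α+1/p} s^α| ≤ 1} ds ≤ K(|x|^p + x²), where k ≥ 1 is a fixed integer. -/

import Mathlib

open MeasureTheory

/-- For `α ∈ (0,1/2)` and `0 < p < 1/(1-α)` there is `K` such that for all `n` and `x`:
`∫_0^{2k/n} |x n^{α+1/p} s^α|² 1_{|x n^{α+1/p} s^α| ≤ 1} ds ≤ K (|x|^p + x²)`. -/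
theorem stmt_7 (α p : ℝ) (hα : α ∈ Set.Ioo (0 : ℝ) (1 / 2)) (hp : 0 < p)
    (hp2 : p < 1 / (1 - α)) (k : ℕ) (hk : 1 ≤ k) :
    ∃ K : ℝ, 0 < K ∧ ∀ (n : ℕ) (x : ℝ),
      (∫ s in (0 : ℝ)..(2 * (k : ℝ) / n),
        |x * (n : ℝ) ^ (α + 1 / p) * s ^ α| ^ 2 *
          (if |x * (n : ℝ) ^ (α + 1 / p) * s ^ α| ≤ 1 then 1 else 0))
        ≤ K * (|x| ^ p + x ^ 2) := by
  obtain ⟨hα0, hα2⟩ := hα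
  have hα1 : α < 1 := by linarith
  have hp2' : p ≤ 2 := by
    have h1 : (0:ℝ) < 1 - α := by linarith
    have := (div_le_iff₀ h1).mpr (by linarith : (1:ℝ) ≤ 2 * (1 - α))
    linarith [le_of_lt hp2, this]
  set E : ℝ := α * p + 1 with hE
  have hE0 : (0:ℝ) < E := by positivity
  have hk0 : (0:ℝ) < 2 * (k:ℝ) := by
    have : (1:ℝ) ≤ (k:ℝ) := by exact_mod_cast hk
    linarith
  refine ⟨(2 * (k:ℝ)) ^ E / E, by positivity, ?_⟩
  intro n x
  have hRHSnn : 0 ≤ (2 * (k:ℝ)) ^ E / E * (|x| ^ p + x ^ 2) := by positivity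
  rcases Nat.eq_zero_or_pos n with hn | hn
  · subst hn
    simp only [Nat.cast_zero, div_zero, intervalIntegral.integral_same]
    exact hRHSnn
  have hN : (0:ℝ) < (n:ℝ) := by exact_mod_cast hn
  set N : ℝ := (n:ℝ) with hNdef
  set c : ℝ := |x| * N ^ (α + 1 / p) with hc
  have hc0 : 0 ≤ c := by positivity
  set T : ℝ := 2 * (k:ℝ) / N with hT
  have hT0 : 0 ≤ T := by positivity
  set f : ℝ → ℝ := fun s =>
    |x * N ^ (α + 1 / p) * s ^ α| ^ 2 *
      (if |x * N ^ (α + 1 / p) * s ^ α| ≤ 1 then 1 else 0) with hf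
  set g : ℝ → ℝ := fun s => c ^ p * s ^ (α * p) with hg
  -- pointwise bound f ≤ g on [0, T]
  have habs : ∀ s : ℝ, 0 ≤ s → |x * N ^ (α + 1 / p) * s ^ α| = c * s ^ α := by
    intro s hs
    rw [abs_mul, abs_mul, abs_of_nonneg (Real.rpow_nonneg hN.le _),
      abs_of_nonneg (Real.rpow_nonneg hs _)]
  have hle : ∀ s ∈ Set.Icc (0:ℝ) T, f s ≤ g s := by
    intro s hs
    have hs0 : 0 ≤ s := hs.1
    have hy0 : 0 ≤ c * s ^ α := mul_nonneg hc0 (Real.rpow_nonneg hs0 _)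
    have hgval : c ^ p * s ^ (α * p) = (c * s ^ α) ^ p := by
      rw [Real.mul_rpow hc0 (Real.rpow_nonneg hs0 _), ← Real.rpow_mul hs0]
    show _ ≤ c ^ p * s ^ (α * p)
    simp only [hf, habs s hs0]
    split_ifs with h
    · rw [mul_one, hgval]
      set y := c * s ^ α with hy
      rcases eq_or_lt_of_le hy0 with hy0' | hy0'
      · rw [← hy0']
        simp [Real.zero_rpow hp.ne']
      · calc y ^ 2 = y ^ (2:ℝ) := by rw [Real.rpow_two]
          _ ≤ y ^ p := Real.rpow_le_rpow_of_exponent_ge hy0' h hp2'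
    · rw [mul_zero, hgval]
      exact Real.rpow_nonneg hy0 _
  -- integrability
  have hfm : Measurable f := by
    have h1 : Measurable fun s : ℝ => |x * N ^ (α + 1 / p) * s ^ α| := by
      exact (measurable_const.mul (Real.continuous_rpow_const hα0.le).measurable).abs
    exact (h1.pow_const 2).mul
      (Measurable.ite (measurableSet_le h1 measurable_const) measurable_const
        measurable_const)
  have hfi : IntervalIntegrable f volume 0 T := by
    rw [intervalIntegrable_iff_integrableOn_Ioc_of_le hT0]
    refine Integrable.mono' (g := fun _ : ℝ => (1:ℝ)) (integrableOn_const measure_Ioc_lt_top.ne)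
      hfm.aestronglyMeasurable (Filter.Eventually.of_forall fun s => ?_)
    simp only [hf, Real.norm_eq_abs]
    split_ifs with h
    · rw [mul_one, abs_of_nonneg (by positivity)]
      calc |x * N ^ (α + 1 / p) * s ^ α| ^ 2 ≤ 1 ^ 2 :=
            pow_le_pow_left₀ (abs_nonneg _) h 2
        _ = 1 := one_pow 2
    · simp
  have hgi : IntervalIntegrable g volume 0 T :=
    (intervalIntegral.intervalIntegrable_rpow' (by linarith : (-1:ℝ) < α * p)).const_mul _
  have hmono := intervalIntegral.integral_mono_on hT0 hfi hgi hle
  -- compute ∫ g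
  have hgint : ∫ s in (0:ℝ)..T, g s = c ^ p * (T ^ E / E) := by
    rw [hg, intervalIntegral.integral_const_mul,
      integral_rpow (Or.inl (by linarith : (-1:ℝ) < α * p))]
    rw [Real.zero_rpow (by positivity : α * p + 1 ≠ 0)]
    rw [hE]
    ring_nf
  -- final bound
  have hcp : c ^ p = |x| ^ p * N ^ E := by
    rw [hc, Real.mul_rpow (abs_nonneg x) (Real.rpow_nonneg hN.le _),
      ← Real.rpow_mul hN.le]
    congr 2
    field_simp
    linarith [hE]
  have hTE : T ^ E = (2 * (k:ℝ)) ^ E / N ^ E := by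
    rw [hT, Real.div_rpow hk0.le hN.le]
  have hNE : (0:ℝ) < N ^ E := Real.rpow_pos_of_pos hN _
  have hfinal : c ^ p * (T ^ E / E) = (2 * (k:ℝ)) ^ E / E * |x| ^ p := by
    rw [hcp, hTE]
    field_simp
  calc (∫ s in (0:ℝ)..T, f s) ≤ ∫ s in (0:ℝ)..T, g s := hmono
    _ = (2 * (k:ℝ)) ^ E / E * |x| ^ p := by rw [hgint, hfinal]
    _ ≤ (2 * (k:ℝ)) ^ E / E * (|x| ^ p + x ^ 2) := by
        apply mul_le_mul_of_nonneg_left _ (by positivity)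
        nlinarith [sq_nonneg x]
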